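/- Let c ∈ ℝ be fixed and let f₁, g₁, f₂, g₂ ∈ ℝ satisfy exp(i·c·(f₁−f₂)) ≠ 1 and exp(i·c·(g₁−g₂)) ≠ 1. Then the inner product a_X(f₁,g₁)ᴴ a_X(f₂,g₂) = Σ_{(x_h,x_v)} conj(a_X(f₁,g₁)(x_h,x_v)) · a_X(f₂,g₂)(x_h,x_v) tends to 0 as min(X_h, X_v) → ∞; that is, for every ε > 0 there exists X₀ such that for all X_h ≥ X₀ and X_v ≥ X₀ the modulus of this inner product is at most ε. -/

import Mathlib

/-- The general UPA response vector `a_X(f,g) ∈ ℂ^X` (with `X = X_h ⬝ X_v`), indexed by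
pairs `(x_h, x_v)` with `0 ≤ x_h < X_h`, `0 ≤ x_v < X_v`, with entries
`(1/√X) ⬝ exp(i⬝c⬝(x_h⬝f + x_v⬝g))`, for a fixed real constant `c` (representing `2πd/λ`). -/
noncomputable def upa (Xh Xv : ℕ) (c f g : ℝ) : Fin Xh × Fin Xv → ℂ :=
  fun x => (1 / Real.sqrt (Xh * Xv) : ℝ) *
    Complex.exp (Complex.I * c * ((x.1 : ℕ) * f + (x.2 : ℕ) * g))

lemma geom_bound (z : ℂ) (hz : z ≠ 1) (habs : ‖z‖ = 1) (n : ℕ) :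
    ‖∑ i : Fin n, z ^ (i : ℕ)‖ ≤ 2 / ‖z - 1‖ := by
  have hd : (0:ℝ) < ‖z - 1‖ := by
    exact norm_pos_iff.mpr (sub_ne_zero.mpr hz)
  rw [Fin.sum_univ_eq_sum_range, geom_sum_eq hz, norm_div]
  apply div_le_div_of_nonneg_right ?_ hd.le
  calc ‖z ^ n - 1‖ ≤ ‖z ^ n‖ + 1 := by
        simpa using (norm_sub_le (z ^ n) 1)
    _ ≤ 2 := by rw [norm_pow, habs, one_pow]; norm_num

lemma term_eq (Xh Xv : ℕ) (c f₁ g₁ f₂ g₂ : ℝ) (x : Fin Xh × Fin Xv) :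
    (starRingEnd ℂ) (upa Xh Xv c f₁ g₁ x) * upa Xh Xv c f₂ g₂ x
      = (((1 / Real.sqrt (Xh * Xv) : ℝ) : ℂ) * ((1 / Real.sqrt (Xh * Xv) : ℝ) : ℂ))
        * ((Complex.exp (Complex.I * c * (f₂ - f₁))) ^ (x.1 : ℕ)
        * (Complex.exp (Complex.I * c * (g₂ - g₁))) ^ (x.2 : ℕ)) := by
  simp only [upa, map_mul, Complex.conj_ofReal, ← Complex.exp_conj, ← Complex.exp_nat_mul,
    ← Complex.exp_add, map_add, map_mul, Complex.conj_I, Complex.conj_ofReal, map_natCast]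
  rw [mul_mul_mul_comm, ← Complex.exp_add]
  congr 1
  ring

lemma abs_exp_one (c r : ℝ) : ‖Complex.exp (Complex.I * c * r)‖ = 1 := by
  rw [Complex.norm_exp]
  simp [Complex.mul_re, Complex.I_re, Complex.I_im]

/-- If `exp(i⬝c⬝(f₁−f₂)) ≠ 1` and `exp(i⬝c⬝(g₁−g₂)) ≠ 1`, then the inner
product `a_X(f₁,g₁)ᴴ a_X(f₂,g₂) = ∑_{(x_h,x_v)} conj(a_X(f₁,g₁)(x)) ⬝ a_X(f₂,g₂)(x)`
tends to `0` as `min(X_h, X_v) → ∞`: for every `ε > 0` there is `X₀` such that for all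
`X_h ≥ X₀` and `X_v ≥ X₀` the modulus of this inner product is at most `ε`. -/
theorem stmt_6 (c f₁ g₁ f₂ g₂ : ℝ)
    (h₁ : Complex.exp (Complex.I * c * (f₁ - f₂)) ≠ 1)
    (h₂ : Complex.exp (Complex.I * c * (g₁ - g₂)) ≠ 1) :
    ∀ ε > (0 : ℝ), ∃ X₀ : ℕ, ∀ Xh Xv : ℕ, X₀ ≤ Xh → X₀ ≤ Xv →
      ‖∑ x : Fin Xh × Fin Xv,
          (starRingEnd ℂ) (upa Xh Xv c f₁ g₁ x) * upa Xh Xv c f₂ g₂ x‖ ≤ ε := by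
  intro ε hε
  set A := Complex.exp (Complex.I * c * (f₂ - f₁)) with hA
  set B := Complex.exp (Complex.I * c * (g₂ - g₁)) with hB
  have hA1 : A ≠ 1 := by
    intro h
    apply h₁
    have : A * Complex.exp (Complex.I * c * (f₁ - f₂)) = 1 := by
      rw [hA, ← Complex.exp_add]; rw [show Complex.I * c * (f₂ - f₁) + Complex.I * c * (f₁ - f₂) = 0 by ring, Complex.exp_zero]
    rwa [h, one_mul] at this
  have hB1 : B ≠ 1 := by
    intro h
    apply h₂
    have : B * Complex.exp (Complex.I * c * (g₁ - g₂)) = 1 := by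
      rw [hB, ← Complex.exp_add]; rw [show Complex.I * c * (g₂ - g₁) + Complex.I * c * (g₁ - g₂) = 0 by ring, Complex.exp_zero]
    rwa [h, one_mul] at this
  have hAabs : ‖A‖ = 1 := by
    rw [hA, show ((f₂:ℂ) - f₁) = ((f₂ - f₁ : ℝ) : ℂ) by push_cast; ring]
    exact abs_exp_one _ _
  have hBabs : ‖B‖ = 1 := by
    rw [hB, show ((g₂:ℂ) - g₁) = ((g₂ - g₁ : ℝ) : ℂ) by push_cast; ring]
    exact abs_exp_one _ _
  have hdA : (0:ℝ) < ‖A - 1‖ := by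
    exact norm_pos_iff.mpr (sub_ne_zero.mpr hA1)
  have hdB : (0:ℝ) < ‖B - 1‖ := by
    exact norm_pos_iff.mpr (sub_ne_zero.mpr hB1)
  -- choose X₀
  obtain ⟨N, hN⟩ := exists_nat_gt (4 / (ε * (‖A - 1‖ * ‖B - 1‖)))
  refine ⟨max N 1, fun Xh Xv hXh hXv => ?_⟩
  have hXh1 : 1 ≤ Xh := le_trans (le_max_right N 1) hXh
  have hXv1 : 1 ≤ Xv := le_trans (le_max_right N 1) hXv
  have hXhN : N ≤ Xh := le_trans (le_max_left N 1) hXh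
  have hXhv : (0:ℝ) < (Xh : ℝ) * Xv := by positivity
  -- rewrite the sum
  have hsum : (∑ x : Fin Xh × Fin Xv,
      (starRingEnd ℂ) (upa Xh Xv c f₁ g₁ x) * upa Xh Xv c f₂ g₂ x)
      = (((1 / ((Xh : ℝ) * Xv)) : ℝ) : ℂ) * ((∑ i : Fin Xh, A ^ (i:ℕ)) * (∑ j : Fin Xv, B ^ (j:ℕ))) := by
    rw [Finset.sum_congr rfl (fun x _ => term_eq Xh Xv c f₁ g₁ f₂ g₂ x)]
    rw [← Finset.mul_sum]
    congr 1
    · rw [← Complex.ofReal_mul, div_mul_div_comm, one_mul,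
        Real.mul_self_sqrt (by positivity : (0:ℝ) ≤ (Xh:ℝ) * Xv)]
    · rw [Finset.sum_mul_sum]
      exact Fintype.sum_prod_type _
  rw [hsum]
  rw [norm_mul, norm_mul, Complex.norm_real, Real.norm_eq_abs]
  have hb1 : ‖∑ i : Fin Xh, A ^ (i:ℕ)‖ ≤ 2 / ‖A - 1‖ :=
    geom_bound A hA1 hAabs Xh
  have hb2 : ‖∑ j : Fin Xv, B ^ (j:ℕ)‖ ≤ 2 / ‖B - 1‖ :=
    geom_bound B hB1 hBabs Xv
  have habs1 : |1 / ((Xh : ℝ) * Xv)| = 1 / ((Xh : ℝ) * Xv) := abs_of_pos (by positivity)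
  rw [habs1]
  calc 1 / ((Xh : ℝ) * Xv) * (‖∑ i : Fin Xh, A ^ (i:ℕ)‖ * ‖∑ j : Fin Xv, B ^ (j:ℕ)‖)
      ≤ 1 / ((Xh : ℝ) * Xv) * ((2 / ‖A - 1‖) * (2 / ‖B - 1‖)) := by
        apply mul_le_mul_of_nonneg_left ?_ (by positivity)
        exact mul_le_mul hb1 hb2 (norm_nonneg _) (by positivity)
    _ = 4 / (((Xh : ℝ) * Xv) * (‖A - 1‖ * ‖B - 1‖)) := by
        field_simp; ring
    _ ≤ ε := by
        rw [div_le_iff₀ (by positivity)]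
        have hNX : (N : ℝ) ≤ (Xh : ℝ) * Xv := by
          calc (N:ℝ) ≤ (Xh:ℝ) := by exact_mod_cast hXhN
            _ = (Xh:ℝ) * 1 := by ring
            _ ≤ (Xh:ℝ) * Xv := by
                apply mul_le_mul_of_nonneg_left (by exact_mod_cast hXv1) (by positivity)
        have h4 : 4 / (ε * (‖A - 1‖ * ‖B - 1‖)) < (Xh:ℝ) * Xv :=
          lt_of_lt_of_le hN hNX
        rw [div_lt_iff₀ (by positivity)] at h4
        nlinarith [hdA, hdB, hε]
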